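/- Let A ∈ ℝ^{n×n} and B ∈ ℝ^{n×1}, and suppose there exist constants λ_i, q_i > 0 (i = 1, …, n) and an invertible matrix P ∈ ℝ^{n×n} such that P A P^{−1} = −diag(λ₁, …, λ_n) and P Pᵀ = diag(q₁, …, q_n). Then A is Hurwitz and the minimum ISS-gain of ẋ = Ax + Bu (i.e. the minimum IOS-gain with output y = x) satisfies γ = γ_as = √( Bᵀ Pᵀ diag( 1/(q₁λ₁²), …, 1/(q_nλ_n²) ) P B ). -/

import Mathlib

open Filter MeasureTheory NormedSpace
open Topology

noncomputable section

/-- Euclidean norm of a vector in `ℝ^k`. -/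
def eNorm {k : ℕ} (v : Fin k → ℝ) : ℝ := Real.sqrt (∑ i, v i ^ 2)

/-- Matrix norm induced by the Euclidean norms. -/
def matNorm {k l : ℕ} (M : Matrix (Fin k) (Fin l) ℝ) : ℝ :=
  sSup {r | ∃ x : Fin l → ℝ, eNorm x = 1 ∧ r = eNorm (M.mulVec x)}

/-- `A` is Hurwitz: every (complex) eigenvalue of `A` has negative real part. -/
def Hurwitz {n : ℕ} (A : Matrix (Fin n) (Fin n) ℝ) : Prop :=
  ∀ μ ∈ spectrum ℂ (A.map (Complex.ofReal)), μ.re < 0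

/-- The matrix exponential `e^{tA}`. -/
def mexp {n : ℕ} (A : Matrix (Fin n) (Fin n) ℝ) (t : ℝ) : Matrix (Fin n) (Fin n) ℝ :=
  exp (t • A)

lemma s14_exp_integral (lam t : ℝ) (hlam : 0 < lam) :
    ∫ s in (0:ℝ)..t, Real.exp (-lam * (t - s)) = (1 - Real.exp (-lam * t)) / lam := by
  have h : ∀ s ∈ Set.uIcc (0:ℝ) t,
      HasDerivAt (fun s => Real.exp (-lam * (t - s)) / lam) (Real.exp (-lam * (t - s))) s := by
    intro s _
    have h1 : HasDerivAt (fun s : ℝ => -lam * (t - s)) lam s := by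
      simpa using ((hasDerivAt_id s).const_sub t).const_mul (-lam)
    have h2 := (h1.exp).div_const lam
    simpa [mul_div_assoc, mul_div_cancel_right₀ _ hlam.ne'] using h2
  rw [intervalIntegral.integral_eq_sub_of_hasDerivAt h
    ((Real.continuous_exp.comp (by continuity)).intervalIntegrable 0 t)]
  simp [sub_self, Real.exp_zero]
  ring

lemma s14_keyInt {u : ℝ → ℝ} (hu : Measurable u)
    (hb : ∀ᵐ s ∂(volume.restrict (Set.Ici (0:ℝ))), |u s| ≤ 1)
    (lam t : ℝ) (ht : 0 ≤ t) :
    IntervalIntegrable (fun s => u s * Real.exp (-lam * (t - s))) volume 0 t := by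
  rw [intervalIntegrable_iff_integrableOn_Ioc_of_le ht]
  have hcont : Continuous fun s : ℝ => Real.exp (-lam * (t - s)) := by continuity
  refine Integrable.mono' (g := fun s => Real.exp (-lam * (t - s)))
    (hcont.integrableOn_Ioc) ((hu.mul hcont.measurable).aestronglyMeasurable) ?_
  have hb' : ∀ᵐ s ∂(volume.restrict (Set.Ioc (0:ℝ) t)), |u s| ≤ 1 :=
    ae_restrict_of_ae_restrict_of_subset (fun s hs => le_of_lt hs.1) hb
  filter_upwards [hb'] with s hs
  rw [Real.norm_eq_abs, abs_mul, Real.abs_exp]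
  calc |u s| * Real.exp (-lam * (t - s)) ≤ 1 * Real.exp (-lam * (t - s)) :=
        mul_le_mul_of_nonneg_right hs (Real.exp_nonneg _)
    _ = Real.exp (-lam * (t - s)) := one_mul _

lemma s14_keyBound {u : ℝ → ℝ} (hu : Measurable u)
    (hb : ∀ᵐ s ∂(volume.restrict (Set.Ici (0:ℝ))), |u s| ≤ 1)
    (lam t : ℝ) (hlam : 0 < lam) (ht : 0 ≤ t) :
    |∫ s in (0:ℝ)..t, u s * Real.exp (-lam * (t - s))| ≤ 1 / lam := by
  have hcont : Continuous fun s : ℝ => Real.exp (-lam * (t - s)) := by continuity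
  have h1 : ‖∫ s in (0:ℝ)..t, u s * Real.exp (-lam * (t - s))‖
      ≤ |∫ s in (0:ℝ)..t, Real.exp (-lam * (t - s))| := by
    apply intervalIntegral.norm_integral_le_abs_of_norm_le ?_ (hcont.intervalIntegrable 0 t)
    have hb' : ∀ᵐ s ∂(volume.restrict (Set.uIoc (0:ℝ) t)), |u s| ≤ 1 := by
      rw [Set.uIoc_of_le ht]
      exact ae_restrict_of_ae_restrict_of_subset (fun s hs => le_of_lt hs.1) hb
    filter_upwards [hb'] with s hs
    rw [Real.norm_eq_abs, abs_mul, Real.abs_exp]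
    calc |u s| * Real.exp (-lam * (t - s)) ≤ 1 * Real.exp (-lam * (t - s)) :=
          mul_le_mul_of_nonneg_right hs (Real.exp_nonneg _)
      _ = Real.exp (-lam * (t - s)) := one_mul _
  rw [Real.norm_eq_abs] at h1
  refine h1.trans ?_
  have he1 : Real.exp (-lam * t) ≤ 1 := Real.exp_le_one_iff.mpr (by nlinarith)
  rw [s14_exp_integral lam t hlam, abs_div, abs_of_pos hlam]
  have h2 : |1 - Real.exp (-lam * t)| ≤ 1 :=
    abs_le.mpr ⟨by linarith, by linarith [Real.exp_nonneg (-lam * t)]⟩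
  gcongr


section
variable {n : ℕ} (A : Matrix (Fin n) (Fin n) ℝ) (l q : Fin n → ℝ)
  (P : Matrix (Fin n) (Fin n) ℝ)

lemma s14_hA (hP : IsUnit P.det) (hPA : P * A * P⁻¹ = -Matrix.diagonal l) :
    A = P⁻¹ * (-Matrix.diagonal l) * P := by
  have hPinv : P⁻¹ * P = 1 := Matrix.nonsing_inv_mul P hP
  have h1 : P⁻¹ * (P * A * P⁻¹) * P = P⁻¹ * P * A * (P⁻¹ * P) := by
    simp only [Matrix.mul_assoc]
  rw [hPA, hPinv, Matrix.one_mul, Matrix.mul_one] at h1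
  exact h1.symm

lemma s14_hmexp (hP : IsUnit P.det) (hPA : P * A * P⁻¹ = -Matrix.diagonal l) (τ : ℝ) :
    mexp A τ = P⁻¹ * Matrix.diagonal (fun i => Real.exp (-l i * τ)) * P := by
  have hD : τ • (-Matrix.diagonal l) = Matrix.diagonal (fun i => -l i * τ) := by
    ext i j
    rcases eq_or_ne i j with rfl | h
    · simp [Matrix.diagonal_apply_eq]; ring
    · simp [Matrix.diagonal_apply_ne _ h]
  have hsmul : τ • A = P⁻¹ * Matrix.diagonal (fun i => -l i * τ) * P⁻¹⁻¹ := by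
    calc τ • A = τ • (P⁻¹ * (-Matrix.diagonal l) * P) := by rw [← s14_hA A l P hP hPA]
      _ = P⁻¹ * (τ • (-Matrix.diagonal l)) * P := by rw [Matrix.mul_smul, Matrix.smul_mul]
      _ = P⁻¹ * Matrix.diagonal (fun i => -l i * τ) * P⁻¹⁻¹ := by
          rw [hD, Matrix.nonsing_inv_nonsing_inv P hP]
  have hUdet : IsUnit (P⁻¹).det := Matrix.isUnit_nonsing_inv_det P hP
  have hU : IsUnit (P⁻¹) := (Matrix.isUnit_iff_isUnit_det _).mpr hUdet
  rw [mexp, hsmul, Matrix.exp_conj (P⁻¹) _ hU, Matrix.exp_diagonal,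
    Matrix.nonsing_inv_nonsing_inv P hP]
  congr 2
  rw [Pi.exp_def]
  funext i
  rw [← Real.exp_eq_exp_ℝ]

lemma s14_hint (hP : IsUnit P.det) (hPA : P * A * P⁻¹ = -Matrix.diagonal l) (B : Fin n → ℝ) (τ : ℝ) :
    (mexp A τ).mulVec B = P⁻¹.mulVec (fun i => Real.exp (-l i * τ) * P.mulVec B i) := by
  rw [s14_hmexp A l P hP hPA, ← Matrix.mulVec_mulVec, ← Matrix.mulVec_mulVec,
    show (Matrix.diagonal fun i => Real.exp (-l i * τ)).mulVec (P.mulVec B)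
        = fun i => Real.exp (-l i * τ) * P.mulVec B i from
      funext fun i => Matrix.mulVec_diagonal _ _ i]

lemma s14_hPPinv (hq : ∀ i, 0 < q i) (hP : IsUnit P.det)
    (hPP : P * P.transpose = Matrix.diagonal q) :
    P⁻¹.transpose * P⁻¹ = Matrix.diagonal (fun i => (q i)⁻¹) := by
  have h1 : (P * P.transpose)⁻¹ = (Matrix.diagonal q)⁻¹ := by rw [hPP]
  rw [Matrix.mul_inv_rev] at h1
  have h2 : (Matrix.diagonal q)⁻¹ = Matrix.diagonal (fun i => (q i)⁻¹) := by
    apply Matrix.inv_eq_right_inv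
    rw [Matrix.diagonal_mul_diagonal,
      show (fun i => q i * (q i)⁻¹) = fun _ => (1:ℝ) from
        funext fun i => mul_inv_cancel₀ (hq i).ne', Matrix.diagonal_one]
  rw [h2] at h1
  rw [Matrix.transpose_nonsing_inv]
  exact h1

lemma s14_hnorm (hq : ∀ i, 0 < q i) (hP : IsUnit P.det)
    (hPP : P * P.transpose = Matrix.diagonal q) (w : Fin n → ℝ) :
    ∑ i, (P⁻¹.mulVec w i)^2 = ∑ i, w i ^ 2 * (q i)⁻¹ := by
  have h1 : ∑ i, (P⁻¹.mulVec w i)^2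
      = dotProduct (P⁻¹.mulVec w) (P⁻¹.mulVec w) := by
    simp [dotProduct, sq]
  have h2 : dotProduct w ((P⁻¹.transpose * P⁻¹).mulVec w)
      = dotProduct (P⁻¹.mulVec w) (P⁻¹.mulVec w) := by
    rw [← Matrix.mulVec_mulVec, Matrix.dotProduct_mulVec, Matrix.vecMul_transpose]
  rw [h1, ← h2, s14_hPPinv q P hq hP hPP]
  simp only [dotProduct, Matrix.mulVec_diagonal]
  exact Finset.sum_congr rfl fun i _ => by ring

end

section
variable {n : ℕ} (A : Matrix (Fin n) (Fin n) ℝ) (l q : Fin n → ℝ)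
  (P : Matrix (Fin n) (Fin n) ℝ) (B : Fin n → ℝ)

lemma s14_xrep (hP : IsUnit P.det) (hPA : P * A * P⁻¹ = -Matrix.diagonal l)
    {u : ℝ → ℝ} (hu : Measurable u)
    (hb : ∀ᵐ s ∂(volume.restrict (Set.Ici (0:ℝ))), |u s| ≤ 1)
    {t : ℝ} (ht : 0 ≤ t) :
    (∫ s in (0:ℝ)..t, u s • (mexp A (t - s)).mulVec B)
      = P⁻¹.mulVec (fun i =>
          P.mulVec B i * ∫ s in (0:ℝ)..t, u s * Real.exp (-l i * (t - s))) := by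
  calc (∫ s in (0:ℝ)..t, u s • (mexp A (t - s)).mulVec B)
      = ∫ s in (0:ℝ)..t, ∑ i, (u s * Real.exp (-l i * (t - s))) •
          (fun i' => P.mulVec B i * P⁻¹ i' i) := by
        apply intervalIntegral.integral_congr
        intro s _
        dsimp only
        rw [s14_hint A l P hP hPA B (t - s)]
        set c := P.mulVec B with hc
        funext i'
        simp only [Pi.smul_apply, smul_eq_mul, Matrix.mulVec, dotProduct,
          Finset.sum_apply, Finset.mul_sum]
        exact Finset.sum_congr rfl fun i _ => by ring
    _ = ∑ i, (∫ s in (0:ℝ)..t, u s * Real.exp (-l i * (t - s))) •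
          (fun i' => P.mulVec B i * P⁻¹ i' i) := by
        rw [intervalIntegral.integral_finset_sum]
        · exact Finset.sum_congr rfl fun i _ => by
            rw [intervalIntegral.integral_smul_const]
        · intro i _
          have h := s14_keyInt hu hb (l i) t ht
          exact ⟨h.1.smul_const _, h.2.smul_const _⟩
    _ = P⁻¹.mulVec (fun i =>
          P.mulVec B i * ∫ s in (0:ℝ)..t, u s * Real.exp (-l i * (t - s))) := by
        set c := P.mulVec B with hc
        funext i'
        simp only [Finset.sum_apply, Pi.smul_apply, smul_eq_mul, Matrix.mulVec,
          dotProduct]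
        exact Finset.sum_congr rfl fun i _ => by ring

lemma s14_hurwitz (hl : ∀ i, 0 < l i) (hP : IsUnit P.det)
    (hPA : P * A * P⁻¹ = -Matrix.diagonal l) :
    ∀ μ ∈ spectrum ℂ (A.map (Complex.ofReal)), μ.re < 0 := by
  intro μ hμ
  set Pc : Matrix (Fin n) (Fin n) ℂ := P.map Complex.ofReal with hPc
  have hPcdet : IsUnit Pc.det := by
    have : Pc.det = (P.det : ℂ) := by
      rw [hPc, show P.map Complex.ofReal = Complex.ofRealHom.mapMatrix P from rfl,
        ← RingHom.map_det]
      rfl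
    rw [this]
    exact (isUnit_iff_ne_zero).mpr (by exact_mod_cast hP.ne_zero)
  have hPcU : IsUnit Pc := (Matrix.isUnit_iff_isUnit_det _).mpr hPcdet
  have hPA' : P * A = (Matrix.diagonal fun i => -(l i)) * P := by
    have h1 := s14_hA A l P hP hPA
    rw [h1, ← Matrix.mul_assoc, ← Matrix.mul_assoc, Matrix.mul_nonsing_inv P hP,
      Matrix.one_mul, show (-Matrix.diagonal l) = Matrix.diagonal fun i => -(l i) from
        Matrix.diagonal_neg l]
  have hmap : Pc * A.map Complex.ofReal
      = (Matrix.diagonal (fun i => -(l i : ℂ))) * Pc := by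
    have h := congrArg (fun M => M.map (Complex.ofRealHom : ℝ →+* ℂ)) hPA'
    rw [Matrix.map_mul, Matrix.map_mul, Matrix.diagonal_map (map_zero _)] at h
    convert h using 3
    on_goal 1 => rfl
    funext i
    simp
    funext i
    simp
    rfl
  have hAc : A.map Complex.ofReal
      = Pc⁻¹ * ((Matrix.diagonal (fun i => -(l i : ℂ))) * Pc) := by
    rw [← hmap, ← Matrix.mul_assoc, Matrix.nonsing_inv_mul Pc hPcdet, Matrix.one_mul]
  have hspec : spectrum ℂ (A.map Complex.ofReal)
      = spectrum ℂ (Matrix.diagonal (fun i => -(l i : ℂ))) := by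
    rw [hAc, ← Matrix.mul_assoc]
    have hcoe : (↑(hPcU.unit⁻¹) : Matrix (Fin n) (Fin n) ℂ) = Pc⁻¹ := by
      rw [Matrix.coe_units_inv, hPcU.unit_spec]
    calc spectrum ℂ (Pc⁻¹ * (Matrix.diagonal fun i => -(l i : ℂ)) * Pc)
        = spectrum ℂ (↑(hPcU.unit⁻¹) * (Matrix.diagonal fun i => -(l i : ℂ)) * ↑hPcU.unit) := by
          rw [hcoe, hPcU.unit_spec]
      _ = spectrum ℂ (Matrix.diagonal fun i => -(l i : ℂ)) := spectrum.units_conjugate'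
  rw [hspec, spectrum_diagonal] at hμ
  obtain ⟨i, hi⟩ := hμ
  rw [← hi]
  simpa using hl i

end

/-- Section 5.2, formula (5.12): under assumption (H)
(`PAP⁻¹ = −diag(λ₁,…,λ_n)`, `PPᵀ = diag(q₁,…,q_n)` with `λ_i, q_i > 0` and `P`
invertible), `A` is Hurwitz and the minimum ISS-gain of `ẋ = Ax + Bu` satisfies
`γ = γ_as = √(BᵀPᵀ diag(1/(q₁λ₁²),…,1/(q_nλ_n²)) P B)`. -/
theorem statement_14 {n : ℕ}
    (A : Matrix (Fin n) (Fin n) ℝ) (B : Fin n → ℝ)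
    (l q : Fin n → ℝ) (hl : ∀ i, 0 < l i) (hq : ∀ i, 0 < q i)
    (P : Matrix (Fin n) (Fin n) ℝ) (hP : IsUnit P.det)
    (hPA : P * A * P⁻¹ = -Matrix.diagonal l)
    (hPP : P * P.transpose = Matrix.diagonal q)
    (x : (ℝ → ℝ) → ℝ → Fin n → ℝ)
    (hx : x = fun u t => ∫ s in (0 : ℝ)..t, u s • (mexp A (t - s)).mulVec B)
    (γ γas : ℝ)
    (hγ : γ = sSup {r | ∃ t ≥ (0 : ℝ), ∃ u : ℝ → ℝ, Measurable u ∧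
      (∀ᵐ s ∂(volume.restrict (Set.Ici (0 : ℝ))), |u s| ≤ 1) ∧ r = eNorm (x u t)})
    (hγas : γas = sSup {r | ∃ u : ℝ → ℝ, Measurable u ∧
      (∀ᵐ s ∂(volume.restrict (Set.Ici (0 : ℝ))), |u s| ≤ 1) ∧
      r = limsup (fun t => eNorm (x u t)) atTop}) :
    Hurwitz A ∧
    γ = γas ∧
    γ = Real.sqrt (dotProduct (P.mulVec B)
      ((Matrix.diagonal fun i => 1 / (q i * l i ^ 2)).mulVec (P.mulVec B))) := by
  set S := {r | ∃ t ≥ (0 : ℝ), ∃ u : ℝ → ℝ, Measurable u ∧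
      (∀ᵐ s ∂(volume.restrict (Set.Ici (0 : ℝ))), |u s| ≤ 1) ∧ r = eNorm (x u t)} with hS
  set T := {r | ∃ u : ℝ → ℝ, Measurable u ∧
      (∀ᵐ s ∂(volume.restrict (Set.Ici (0 : ℝ))), |u s| ≤ 1) ∧
      r = limsup (fun t => eNorm (x u t)) atTop} with hT
  set c : Fin n → ℝ := P.mulVec B with hc
  set R : ℝ := ∑ i, (c i / l i) ^ 2 * (q i)⁻¹ with hR
  -- representation of the state
  have hxrep : ∀ u : ℝ → ℝ, Measurable u →
      (∀ᵐ s ∂(volume.restrict (Set.Ici (0 : ℝ))), |u s| ≤ 1) → ∀ t : ℝ, 0 ≤ t →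
      x u t = P⁻¹.mulVec (fun i =>
        c i * ∫ s in (0:ℝ)..t, u s * Real.exp (-l i * (t - s))) := by
    intro u hu hb t ht
    rw [hx]
    exact s14_xrep A l P B hP hPA hu hb ht
  have hnorm_eq : ∀ u : ℝ → ℝ, Measurable u →
      (∀ᵐ s ∂(volume.restrict (Set.Ici (0 : ℝ))), |u s| ≤ 1) → ∀ t : ℝ, 0 ≤ t →
      eNorm (x u t) = Real.sqrt (∑ i,
        (c i * ∫ s in (0:ℝ)..t, u s * Real.exp (-l i * (t - s))) ^ 2 * (q i)⁻¹) := by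
    intro u hu hb t ht
    rw [hxrep u hu hb t ht, eNorm, s14_hnorm q P hq hP hPP]
  -- upper bound
  have hub : ∀ u : ℝ → ℝ, Measurable u →
      (∀ᵐ s ∂(volume.restrict (Set.Ici (0 : ℝ))), |u s| ≤ 1) → ∀ t : ℝ, 0 ≤ t →
      eNorm (x u t) ≤ Real.sqrt R := by
    intro u hu hb t ht
    rw [hnorm_eq u hu hb t ht]
    apply Real.sqrt_le_sqrt
    rw [hR]
    apply Finset.sum_le_sum
    intro i _
    have hg := s14_keyBound hu hb (l i) t (hl i) ht
    have h2 : (∫ s in (0:ℝ)..t, u s * Real.exp (-l i * (t - s))) ^ 2 ≤ (1 / l i) ^ 2 := by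
      rw [← sq_abs]
      have h1l : |∫ s in (0:ℝ)..t, u s * Real.exp (-l i * (t - s))| ≤ 1 / l i := hg
      exact pow_le_pow_left₀ (abs_nonneg _) h1l 2
    apply mul_le_mul_of_nonneg_right _ (inv_nonneg.mpr (hq i).le)
    calc (c i * ∫ s in (0:ℝ)..t, u s * Real.exp (-l i * (t - s))) ^ 2
        = c i ^ 2 * (∫ s in (0:ℝ)..t, u s * Real.exp (-l i * (t - s))) ^ 2 := by ring
      _ ≤ c i ^ 2 * (1 / l i) ^ 2 := mul_le_mul_of_nonneg_left h2 (sq_nonneg _)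
      _ = (c i / l i) ^ 2 := by ring
  -- the constant input 1
  have hu1 : Measurable (fun _ : ℝ => (1:ℝ)) := measurable_const
  have hb1 : ∀ᵐ s ∂(volume.restrict (Set.Ici (0 : ℝ))), |(fun _ : ℝ => (1:ℝ)) s| ≤ 1 :=
    Eventually.of_forall fun s => by norm_num
  have hg1 : ∀ t : ℝ, ∀ i, (∫ s in (0:ℝ)..t, (1:ℝ) * Real.exp (-l i * (t - s)))
      = (1 - Real.exp (-l i * t)) / l i := by
    intro t i
    simp only [one_mul]
    exact s14_exp_integral (l i) t (hl i)
  have htend : Tendsto (fun t => eNorm (x (fun _ => (1:ℝ)) t)) atTop (𝓝 (Real.sqrt R)) := by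
    have hsum : Tendsto (fun t => ∑ i, (c i * ((1 - Real.exp (-l i * t)) / l i)) ^ 2 * (q i)⁻¹)
        atTop (𝓝 R) := by
      rw [hR]
      apply tendsto_finset_sum
      intro i _
      have he : Tendsto (fun t : ℝ => Real.exp (-l i * t)) atTop (𝓝 0) := by
        have hm : Tendsto (fun t : ℝ => l i * t) atTop atTop :=
          Tendsto.const_mul_atTop (hl i) tendsto_id
        have := tendsto_inv_atTop_zero.comp (Real.tendsto_exp_atTop.comp hm)
        refine this.congr fun t => ?_
        simp [Real.exp_neg, neg_mul, Function.comp]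
      have h0 : Tendsto (fun t => (c i * ((1 - Real.exp (-l i * t)) / l i)) ^ 2 * (q i)⁻¹)
          atTop (𝓝 ((c i * ((1 - 0) / l i)) ^ 2 * (q i)⁻¹)) := by
        exact ((((tendsto_const_nhds.sub he).div_const _).const_mul _).pow 2).mul_const _
      simpa [mul_one_div, div_eq_mul_inv] using h0
    have h1 : Tendsto (fun t => Real.sqrt
        (∑ i, (c i * ((1 - Real.exp (-l i * t)) / l i)) ^ 2 * (q i)⁻¹)) atTop
        (𝓝 (Real.sqrt R)) :=
      (Real.continuous_sqrt.continuousAt.tendsto).comp hsum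
    apply h1.congr'
    filter_upwards [eventually_ge_atTop (0:ℝ)] with t ht
    rw [hnorm_eq _ hu1 hb1 t ht]
    congr 1
    exact Finset.sum_congr rfl fun i _ => by rw [hg1 t i]
  have hmemS : ∀ t : ℝ, 0 ≤ t → eNorm (x (fun _ => (1:ℝ)) t) ∈ S :=
    fun t ht => ⟨t, ht, fun _ => 1, hu1, hb1, rfl⟩
  have hubS : ∀ r ∈ S, r ≤ Real.sqrt R := by
    rintro r ⟨t, ht, u, hu, hb, rfl⟩
    exact hub u hu hb t ht
  have hγR : γ = Real.sqrt R := by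
    rw [hγ]
    refine le_antisymm (csSup_le ⟨_, hmemS 0 le_rfl⟩ hubS) ?_
    apply le_of_tendsto htend
    filter_upwards [eventually_ge_atTop (0:ℝ)] with t ht
    exact le_csSup ⟨Real.sqrt R, hubS⟩ (hmemS t ht)
  have hTub : ∀ r ∈ T, r ≤ Real.sqrt R := by
    rintro r ⟨u, hu, hb, rfl⟩
    have hev : ∀ᶠ t in atTop, eNorm (x u t) ≤ Real.sqrt R := by
      filter_upwards [eventually_ge_atTop (0:ℝ)] with t ht
      exact hub u hu hb t ht
    have hev0 : ∀ᶠ t in atTop, (0:ℝ) ≤ eNorm (x u t) :=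
      Eventually.of_forall fun t => Real.sqrt_nonneg _
    exact Filter.limsup_le_of_le (isCoboundedUnder_le_of_eventually_le atTop hev0) hev
  have hmemT : Real.sqrt R ∈ T := ⟨fun _ => 1, hu1, hb1, htend.limsup_eq.symm⟩
  have hγasR : γas = Real.sqrt R := by
    rw [hγas]
    exact le_antisymm (csSup_le ⟨_, hmemT⟩ hTub) (le_csSup ⟨Real.sqrt R, hTub⟩ hmemT)
  have hRdot : dotProduct (P.mulVec B)
      ((Matrix.diagonal fun i => 1 / (q i * l i ^ 2)).mulVec (P.mulVec B)) = R := by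
    rw [hR, hc]
    simp only [dotProduct, Matrix.mulVec_diagonal]
    refine Finset.sum_congr rfl fun i _ => ?_
    field_simp
  refine ⟨s14_hurwitz A l P hl hP hPA, ?_, ?_⟩
  · rw [hγR, hγasR]
  · rw [hγR, hRdot]
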